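/- Fix σ ∈ (0,2), m ≥ 1, Δx > 0, Δt > 0, integers I, K ≥ 2 and J ≥ 1. Let f_0, …, f_I be nonnegative reals, set B₀ = max_i f_i and b_max = B₀^m, and assume the CFL condition ν_σ · m · B₀^{m−1} · Δt ≤ Δx^σ. Suppose grid functions W_0, W_1, …, W_J satisfy: L_σ^D W_j = 0 at every interior node and W_j = 0 at every node of Γ_h, for every j; (W_0)_i^0 = f_i^m for 0 ≤ i ≤ I; and for every 1 ≤ j ≤ J and 0 < i < I, (W_j)_i^0 = [ ν_σ (Δt/Δx^σ) ((W_{j−1})_i^1 − (W_{j−1})_i^0) + ((W_{j−1})_i^0)^{1/m} ]^m, where s^{1/m} denotes the real m-th root of s ≥ 0 (in particular, part of the claim is that all quantities inside the roots and brackets remain nonnegative). Then 0 ≤ (W_j)_i^k ≤ b_max for all i, k, j. -/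

import Mathlib

open Finset

private lemma maxp (σ Δx : ℝ) (hσ2 : σ < 2) (hΔx : 0 < Δx)
    (I K : ℕ) (V : ℕ → ℕ → ℝ)
    (hharm : ∀ i k, 0 < i → i < I → 0 < k → k < K →
      ((k : ℝ) * Δx) ^ (1 - σ) *
          (V (i+1) k + V (i-1) k + V i (k+1) + V i (k-1) - 4 * V i k) / Δx ^ 2
        + (1 - σ) * ((k : ℝ) * Δx) ^ (-σ) * (V i (k+1) - V i k) / Δx = 0)
    (hlat : ∀ i k, i ≤ I → k ≤ K → (i = 0 ∨ i = I ∨ k = K) → V i k = 0)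
    (b : ℝ) (hb : 0 ≤ b) (hbot : ∀ i ≤ I, V i 0 ≤ b) :
    ∀ i ≤ I, ∀ k ≤ K, V i k ≤ b := by
  set S := (Finset.range (I+1)) ×ˢ (Finset.range (K+1)) with hS
  have hSne : S.Nonempty := by
    refine ⟨(0,0), ?_⟩
    simp [hS]
  set M := S.sup' hSne (fun p => V p.1 p.2) with hM
  have hle : ∀ i ≤ I, ∀ k ≤ K, V i k ≤ M := by
    intro i hi k hk
    exact Finset.le_sup' (f := fun p : ℕ × ℕ => V p.1 p.2)
      (by simp [hS, Finset.mem_product]; omega : (i,k) ∈ S)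
  obtain ⟨p, hp, hpM⟩ := Finset.exists_mem_eq_sup' hSne (fun p : ℕ × ℕ => V p.1 p.2)
  suffices hMb : M ≤ b by
    intro i hi k hk; exact (hle i hi k hk).trans hMb
  have hpI : p.1 ≤ I ∧ p.2 ≤ K := by
    rw [hS] at hp
    simp [Finset.mem_product] at hp
    omega
  have claim : ∀ n : ℕ, ∀ i k, i ≤ I → k ≤ K → K ≤ k + n → V i k = M → M ≤ b := by
    intro n
    induction n with
    | zero =>
      intro i k hi hk hKk hV
      have hkK : k = K := le_antisymm hk (by omega)
      rw [← hV, hlat i k hi hk (Or.inr (Or.inr hkK))]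
      exact hb
    | succ n ih =>
      intro i k hi hk hKk hV
      by_cases hbd : i = 0 ∨ i = I ∨ k = K
      · rw [← hV, hlat i k hi hk hbd]; exact hb
      push_neg at hbd
      obtain ⟨hi0, hiI, hkK⟩ := hbd
      by_cases hk0 : k = 0
      · rw [← hV, hk0]; exact hbot i hi
      -- interior node
      have hik : 0 < i ∧ i < I ∧ 0 < k ∧ k < K := by omega
      have eq := hharm i k hik.1 hik.2.1 hik.2.2.1 (by omega)
      have hy : (0:ℝ) < (k:ℝ) * Δx := by
        have : (0:ℝ) < (k:ℝ) := by exact_mod_cast Nat.pos_of_ne_zero hk0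
        positivity
      have hA : ((k:ℝ)*Δx) ^ (1-σ) = ((k:ℝ)*Δx) * ((k:ℝ)*Δx) ^ (-σ) := by
        rw [show (1:ℝ)-σ = 1 + (-σ) by ring, Real.rpow_add hy, Real.rpow_one]
      set t := ((k:ℝ)*Δx) ^ (-σ) with ht
      have htpos : 0 < t := Real.rpow_pos_of_pos hy _
      rw [hA] at eq
      have hΔ0 : Δx ≠ 0 := ne_of_gt hΔx
      have ht0 : t ≠ 0 := ne_of_gt htpos
      have h1 : t * Δx ^ 2 * ((k:ℝ) * (V (i+1) k + V (i-1) k + V i (k+1) + V i (k-1) - 4 * V i k)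
          + (1-σ) * (V i (k+1) - V i k)) = 0 := by
        field_simp at eq
        linear_combination Δx ^ 2 * eq
      have key : (k:ℝ) * (V (i+1) k + V (i-1) k + V i (k+1) + V i (k-1) - 4 * V i k)
          + (1-σ) * (V i (k+1) - V i k) = 0 :=
        (mul_eq_zero.mp h1).resolve_left (mul_ne_zero ht0 (pow_ne_zero 2 hΔ0))
      have hVp := hle (i+1) (by omega) k hk
      have hVm := hle (i-1) (by omega) k hk
      have hVd := hle i hi (k-1) (by omega)
      have hVu := hle i hi (k+1) (by omega)
      have hk1 : (1:ℝ) ≤ (k:ℝ) := by exact_mod_cast Nat.one_le_iff_ne_zero.mpr hk0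
      have hkpos : (0:ℝ) ≤ (k:ℝ) := by linarith
      have h3 : ((k:ℝ) + 1 - σ) * (V i (k+1) - M) ≥ 0 := by
        have p1 : 0 ≤ (k:ℝ) * (M - V (i+1) k) := mul_nonneg hkpos (by linarith)
        have p2 : 0 ≤ (k:ℝ) * (M - V (i-1) k) := mul_nonneg hkpos (by linarith)
        have p3 : 0 ≤ (k:ℝ) * (M - V i (k-1)) := mul_nonneg hkpos (by linarith)
        rw [hV] at key
        nlinarith [key, p1, p2, p3]
      have h4 : (0:ℝ) < (k:ℝ) + 1 - σ := by linarith
      have h5 : V i (k+1) = M := le_antisymm (hle i hi (k+1) (by omega)) (by nlinarith [h3, h4])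
      exact ih i (k+1) hi (by omega) (by omega) h5
  exact claim K p.1 p.2 hpI.1 hpI.2 (by omega) hpM.symm

private lemma bern_aux (m u B : ℝ) (hm : 1 ≤ m) (hu : 0 ≤ u) (huB : u ≤ B) :
    B ^ m - u ^ m ≤ m * B ^ (m - 1) * (B - u) := by
  rcases eq_or_lt_of_le (hu.trans huB) with hB | hB
  · have hu0 : u = 0 := le_antisymm (hB ▸ huB) hu
    rw [hu0, ← hB]
    simp
  · have hx : (-1:ℝ) ≤ u / B - 1 := by
      have : (0:ℝ) ≤ u / B := by positivity
      linarith
    have hbern := one_add_mul_self_le_rpow_one_add hx hm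
    rw [show (1 + (u/B - 1)) = u/B by ring, Real.div_rpow hu hB.le] at hbern
    have hBm : (0:ℝ) < B ^ m := Real.rpow_pos_of_pos hB m
    have h3 := mul_le_mul_of_nonneg_right hbern hBm.le
    rw [div_mul_cancel₀ _ hBm.ne'] at h3
    have h4 : B ^ m * (u / B) = B ^ (m-1) * u := by
      rw [Real.rpow_sub hB, Real.rpow_one]; ring
    have h7 : B ^ m = B ^ (m-1) * B := by
      rw [Real.rpow_sub hB, Real.rpow_one, div_mul_cancel₀ _ hB.ne']
    have h3' : B ^ m + m * (B ^ (m-1) * u) - m * (B ^ (m-1) * B) ≤ u ^ m := by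
      calc B ^ m + m * (B ^ (m-1) * u) - m * (B ^ (m-1) * B)
          = (1 + m * (u / B - 1)) * B ^ m := by linear_combination (-m) * h4 + m * h7
        _ ≤ u ^ m := h3
    nlinarith [h3']

private lemma phi_bound (lam m B v0 v1 : ℝ) (hm : 1 ≤ m) (hB : 0 ≤ B)
    (hlam : 0 ≤ lam) (hcfl : lam * m * B ^ (m - 1) ≤ 1)
    (hv0 : 0 ≤ v0) (hv0' : v0 ≤ B ^ m) (hv1 : 0 ≤ v1) (hv1' : v1 ≤ B ^ m) :
    0 ≤ lam * (v1 - v0) + v0 ^ (1/m) ∧ lam * (v1 - v0) + v0 ^ (1/m) ≤ B := by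
  have hm0 : m ≠ 0 := by positivity
  set u := v0 ^ (1/m) with hu
  have hu0 : 0 ≤ u := Real.rpow_nonneg hv0 _
  have hum : u ^ m = v0 := by
    rw [hu, ← Real.rpow_mul hv0, one_div_mul_cancel hm0, Real.rpow_one]
  have huB : u ≤ B := by
    have h := Real.rpow_le_rpow hv0 hv0' (by positivity : (0:ℝ) ≤ 1/m)
    rw [← Real.rpow_mul hB, mul_one_div_cancel hm0, Real.rpow_one] at h
    exact hu ▸ h
  have hBm1 : (0:ℝ) ≤ B ^ (m-1) := Real.rpow_nonneg hB _
  have hlamu : lam * u ^ (m-1) ≤ 1 := by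
    have h1 : u ^ (m-1) ≤ B ^ (m-1) := Real.rpow_le_rpow hu0 huB (by linarith)
    nlinarith [mul_nonneg hlam hBm1]
  have humm : u ^ m = u ^ (m-1) * u := by
    rcases eq_or_lt_of_le hu0 with h | h
    · rw [← h, Real.zero_rpow hm0, mul_zero]
    · rw [show m = (m-1) + 1 by ring, Real.rpow_add h, Real.rpow_one]
      ring_nf
  constructor
  · rw [← hum, humm]
    have p1 : 0 ≤ lam * v1 := mul_nonneg hlam hv1
    have p2 : 0 ≤ u * (1 - lam * u ^ (m-1)) := mul_nonneg hu0 (by linarith)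
    nlinarith [p1, p2]
  · rw [← hum]
    have hbern := bern_aux m u B hm hu0 huB
    have h1 : lam * (v1 - u ^ m) ≤ lam * (B ^ m - u ^ m) :=
      mul_le_mul_of_nonneg_left (by linarith) hlam
    have h2 : lam * (B ^ m - u ^ m) ≤ lam * (m * B ^ (m-1) * (B - u)) :=
      mul_le_mul_of_nonneg_left hbern hlam
    have h3 : lam * (m * B ^ (m-1) * (B - u)) ≤ B - u := by
      have := mul_le_mul_of_nonneg_right hcfl (by linarith : (0:ℝ) ≤ B - u)
      nlinarith [this]
    linarith

/-- `ν_σ = σ μ_σ` with `μ_σ = 2^{σ-1} Γ(σ/2) / Γ(1-σ/2)`. -/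
noncomputable def nuSigma (σ : ℝ) : ℝ :=
  σ * (2 ^ (σ - 1) * Real.Gamma (σ / 2) / Real.Gamma (1 - σ / 2))

/-- Discrete maximum principle for the full scheme (Theorem 4.3):
under the CFL condition `ν_σ m B₀^{m-1} Δt ≤ Δx^σ`, the numerical solution satisfies
`0 ≤ (W_j)_i^k ≤ b_max = B₀^m` at all nodes and times, and the quantities inside the
`m`-th roots and brackets of the boundary update remain nonnegative. -/
theorem stmt10 (σ m Δx Δt : ℝ) (hσ : σ ∈ Set.Ioo (0:ℝ) 2) (hm : 1 ≤ m)
    (hΔx : 0 < Δx) (hΔt : 0 < Δt) (I K J : ℕ) (hI : 2 ≤ I) (hK : 2 ≤ K) (hJ : 1 ≤ J)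
    (f : ℕ → ℝ) (hf : ∀ i ≤ I, 0 ≤ f i)
    (B₀ : ℝ)
    (hB₀ : B₀ = (Finset.range (I+1)).sup'
      (Finset.nonempty_range_iff.mpr (Nat.succ_ne_zero I)) f)
    (bmax : ℝ) (hbmax : bmax = B₀ ^ m)
    (hcfl : nuSigma σ * m * B₀ ^ (m - 1) * Δt ≤ Δx ^ σ)
    (W : ℕ → ℕ → ℕ → ℝ)
    (hharm : ∀ j ≤ J, ∀ i k, 0 < i → i < I → 0 < k → k < K →
      ((k : ℝ) * Δx) ^ (1 - σ) *
          (W j (i+1) k + W j (i-1) k + W j i (k+1) + W j i (k-1) - 4 * W j i k) / Δx ^ 2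
        + (1 - σ) * ((k : ℝ) * Δx) ^ (-σ) * (W j i (k+1) - W j i k) / Δx = 0)
    (hlat : ∀ j ≤ J, ∀ i k, i ≤ I → k ≤ K → (i = 0 ∨ i = I ∨ k = K) → W j i k = 0)
    (hinit : ∀ i ≤ I, W 0 i 0 = (f i) ^ m)
    (hupd : ∀ j, 1 ≤ j → j ≤ J → ∀ i, 0 < i → i < I →
      W j i 0 = (nuSigma σ * (Δt / Δx ^ σ) * (W (j-1) i 1 - W (j-1) i 0)
        + (W (j-1) i 0) ^ (1/m)) ^ m) :
    (∀ j ≤ J, ∀ i ≤ I, ∀ k ≤ K, 0 ≤ W j i k ∧ W j i k ≤ bmax)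
    ∧ (∀ j, 1 ≤ j → j ≤ J → ∀ i, 0 < i → i < I →
        0 ≤ nuSigma σ * (Δt / Δx ^ σ) * (W (j-1) i 1 - W (j-1) i 0)
          + (W (j-1) i 0) ^ (1/m)) := by
  obtain ⟨hσ0, hσ2⟩ := hσ
  have hB₀0 : 0 ≤ B₀ := by
    rw [hB₀]
    exact (hf 0 (by omega)).trans (Finset.le_sup' f (Finset.mem_range.mpr (by omega)))
  have hbm0 : 0 ≤ bmax := hbmax ▸ Real.rpow_nonneg hB₀0 m
  have hν : 0 < nuSigma σ := by
    have h1 : 0 < Real.Gamma (σ/2) := Real.Gamma_pos_of_pos (by linarith)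
    have h2 : 0 < Real.Gamma (1 - σ/2) := Real.Gamma_pos_of_pos (by linarith)
    unfold nuSigma
    have h3 : (0:ℝ) < (2:ℝ) ^ (σ - 1) := Real.rpow_pos_of_pos (by norm_num) _
    positivity
  have hΔxσ : (0:ℝ) < Δx ^ σ := Real.rpow_pos_of_pos hΔx σ
  have hlam0 : 0 ≤ nuSigma σ * (Δt / Δx ^ σ) := by positivity
  have hcfl' : nuSigma σ * (Δt / Δx ^ σ) * m * B₀ ^ (m - 1) ≤ 1 := by
    rw [show nuSigma σ * (Δt / Δx ^ σ) * m * B₀ ^ (m - 1)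
        = (nuSigma σ * m * B₀ ^ (m - 1) * Δt) / Δx ^ σ by ring, div_le_one hΔxσ]
    exact hcfl
  -- interior max principle at each time level
  have grid : ∀ j ≤ J, (∀ i ≤ I, 0 ≤ W j i 0 ∧ W j i 0 ≤ bmax) →
      ∀ i ≤ I, ∀ k ≤ K, 0 ≤ W j i k ∧ W j i k ≤ bmax := by
    intro j hj hbot i hi k hk
    constructor
    · have hlow := maxp σ Δx hσ2 hΔx I K (fun i k => -W j i k)
        (by
          intro i k h1 h2 h3 h4
          linear_combination - hharm j hj i k h1 h2 h3 h4)
        (by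
          intro i k h1 h2 h3
          simp only [hlat j hj i k h1 h2 h3, neg_zero])
        0 le_rfl
        (by
          intro i hi
          simp only [neg_nonpos]
          exact (hbot i hi).1)
        i hi k hk
      simpa using hlow
    · exact maxp σ Δx hσ2 hΔx I K (W j) (hharm j hj) (hlat j hj) bmax hbm0
        (fun i hi => (hbot i hi).2) i hi k hk
  -- bottom bounds by induction on time
  have bot : ∀ j, j ≤ J → ∀ i ≤ I, 0 ≤ W j i 0 ∧ W j i 0 ≤ bmax := by
    intro j
    induction j with
    | zero =>
      intro _ i hi
      rw [hinit i hi]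
      refine ⟨Real.rpow_nonneg (hf i hi) m, ?_⟩
      rw [hbmax]
      exact Real.rpow_le_rpow (hf i hi)
        (hB₀ ▸ Finset.le_sup' f (Finset.mem_range.mpr (by omega))) (by linarith)
    | succ j ih =>
      intro hj i hi
      have hj' : j ≤ J := by omega
      have hbotj := ih hj'
      by_cases hi0 : i = 0 ∨ i = I
      · rw [hlat (j+1) hj i 0 hi (by omega) (by tauto)]
        exact ⟨le_rfl, hbm0⟩
      push_neg at hi0
      have hii : 0 < i ∧ i < I := by omega
      rw [hupd (j+1) (by omega) hj i hii.1 hii.2]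
      simp only [Nat.add_sub_cancel]
      have hv1 := grid j hj' hbotj i hi 1 (by omega)
      have hv0 := hbotj i hi
      have hphi := phi_bound (nuSigma σ * (Δt / Δx ^ σ)) m B₀ (W j i 0) (W j i 1)
        hm hB₀0 hlam0 hcfl' hv0.1 (hbmax ▸ hv0.2) hv1.1 (hbmax ▸ hv1.2)
      exact ⟨Real.rpow_nonneg hphi.1 m,
        hbmax ▸ Real.rpow_le_rpow hphi.1 hphi.2 (by linarith)⟩
  constructor
  · intro j hj i hi k hk
    exact grid j hj (bot j hj) i hi k hk
  · intro j hj1 hjJ i hi1 hiI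
    have hj' : j - 1 ≤ J := by omega
    have hb := bot (j-1) hj'
    have hv1 := grid (j-1) hj' hb i (by omega) 1 (by omega)
    have hv0 := hb i (by omega)
    exact (phi_bound (nuSigma σ * (Δt / Δx ^ σ)) m B₀ (W (j-1) i 0) (W (j-1) i 1)
      hm hB₀0 hlam0 hcfl' hv0.1 (hbmax ▸ hv0.2) hv1.1 (hbmax ▸ hv1.2)).1
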